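/- Let M = GL2 act on quadruples a = (a1,a2,a3,a4) via the identification with binary cubic forms f_a(u,v) = a1u³+3a2u²v+3a3uv²+a4v³, where m = (a b; c d) acts by (ρ3(m)f_a)(u,v) = f_a(du+bv, cu+av). Then for all m ∈ GL2(R) and all quadruples a, the Freudenthal quartic satisfies q(ρ3(m)a) = det(m)⁶ · q(a). -/
import Mathlib


/-- The Freudenthal quartic form on coefficients of a binary cubic. -/
def qFreu {R : Type*} [CommRing R] (x : R × R × R × R) : R :=
  match x with
  | (a1, a2, a3, a4) =>
    -3*a2^2*a3^2 + 4*a1*a3^3 + 4*a2^3*a4 - 6*a1*a2*a3*a4 + a1^2*a4^2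

/-- The symmetric-cube action of the matrix (a b; c d) on quadruples identified with
binary cubics f_x(u,v) = a1u³+3a2u²v+3a3uv²+a4v³, via (ρ3(m)f)(u,v) = f(du+bv, cu+av):
the result is the coefficient quadruple of the transformed cubic. -/
def rho3 {R : Type*} [CommRing R] (a b c d : R) (x : R × R × R × R) : R × R × R × R :=
  match x with
  | (a1, a2, a3, a4) =>
    (a1*d^3 + 3*a2*d^2*c + 3*a3*d*c^2 + a4*c^3,
     a1*d^2*b + a2*(2*d*b*c + d^2*a) + a3*(b*c^2 + 2*d*c*a) + a4*c^2*a,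
     a1*d*b^2 + a2*(b^2*c + 2*d*b*a) + a3*(2*b*c*a + d*a^2) + a4*c*a^2,
     a1*b^3 + 3*a2*b^2*a + 3*a3*b*a^2 + a4*a^3)

/-- q(ρ3(m)a) = det(m)⁶ · q(a) for all m ∈ GL2(R) (indeed all 2×2 matrices). -/
theorem stmt1 {R : Type*} [CommRing R] (a b c d : R) (x : R × R × R × R) :
    qFreu (rho3 a b c d x) = (a*d - b*c)^6 * qFreu x := by
  obtain ⟨a1,a2,a3,a4⟩ := x
  simp only [qFreu, rho3]
  ring
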